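/- Fix an integer n ≥ 2 and θ ∈ (0,1). Then n² − 4nθ(1 − θ) > 0, the number x*(θ) = (n − √(n² − 4nθ(1 − θ)))/(2nθ) is the unique solution in [0,1) of the equation x = (1 − θ)/n + θx² (equivalently nθx² − nx + (1 − θ) = 0), it satisfies 0 < x*(θ) < 1/n, and the function θ ↦ x*(θ) is strictly decreasing on (0,1). -/

import Mathlib

/-- The candidate equilibrium value `x*(θ) = (n - √(n² - 4nθ(1-θ)))/(2nθ)`. -/
noncomputable def xstarVal (n : ℕ) (θ : ℝ) : ℝ :=
  ((n : ℝ) - Real.sqrt ((n : ℝ) ^ 2 - 4 * n * θ * (1 - θ))) / (2 * n * θ)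

lemma key (n : ℕ) (hn : 2 ≤ n) (θ : ℝ) (hθ0 : 0 < θ) (hθ1 : θ < 1) :
    0 < (n : ℝ) ^ 2 - 4 * n * θ * (1 - θ) ∧
    xstarVal n θ = (1 - θ) / n + θ * xstarVal n θ ^ 2 ∧
    0 < xstarVal n θ ∧ xstarVal n θ < 1 / n ∧
    θ * xstarVal n θ < 1 - θ := by
  have hN : (2:ℝ) ≤ (n:ℝ) := by exact_mod_cast hn
  have hN0 : (0:ℝ) < n := by linarith
  set s := Real.sqrt ((n : ℝ) ^ 2 - 4 * n * θ * (1 - θ)) with hs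
  have hD : 0 < (n : ℝ) ^ 2 - 4 * n * θ * (1 - θ) := by
    nlinarith [sq_nonneg (2*θ - 1), mul_pos hθ0 (by linarith : (0:ℝ) < 1 - θ)]
  have hsq : s ^ 2 = (n : ℝ) ^ 2 - 4 * n * θ * (1 - θ) := Real.sq_sqrt hD.le
  have hs0 : 0 < s := Real.sqrt_pos.mpr hD
  have hsN : s < n := by
    by_contra h
    push_neg at h
    nlinarith [hsq, mul_pos hθ0 (by linarith : (0:ℝ) < 1 - θ)]
  have hden : (0:ℝ) < 2 * n * θ := by positivity
  refine ⟨hD, ?_, ?_, ?_, ?_⟩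
  · rw [xstarVal, ← hs]
    field_simp
    nlinarith [hsq]
  · exact div_pos (by linarith) hden
  · rw [xstarVal, div_lt_div_iff₀ hden hN0]
    -- n*(n - s) < 2*n*θ ... goal: (n - s) * n < 1 * (2*n*θ)? check later
    have h1 : (n:ℝ) - 2*θ < s := by
      have h2 : (0:ℝ) < n - 2*θ := by linarith
      by_contra h
      push_neg at h
      nlinarith [hsq, mul_pos hθ0 hθ0, mul_self_le_mul_self hs0.le h]
    nlinarith
  · have hroot : 2 * (n:ℝ) * θ < n + s := by
      rcases le_or_gt (2*(n:ℝ)*θ - n) 0 with h | h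
      · linarith
      · by_contra hc
        push_neg at hc
        have h4 : s ≤ 2*(n:ℝ)*θ - n := by linarith
        nlinarith [hsq, mul_self_le_mul_self hs0.le h4,
          mul_pos hθ0 (by linarith : (0:ℝ) < 1 - θ)]
    rw [xstarVal, mul_comm, div_mul_eq_mul_div, div_lt_iff₀ hden]
    nlinarith [hroot]

theorem stmt14 (n : ℕ) (hn : 2 ≤ n) (θ : ℝ) (hθ0 : 0 < θ) (hθ1 : θ < 1) :
    0 < (n : ℝ) ^ 2 - 4 * n * θ * (1 - θ) ∧
    xstarVal n θ = (1 - θ) / n + θ * xstarVal n θ ^ 2 ∧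
    (∀ y : ℝ, 0 ≤ y → y < 1 → y = (1 - θ) / n + θ * y ^ 2 → y = xstarVal n θ) ∧
    0 < xstarVal n θ ∧ xstarVal n θ < 1 / n ∧
    StrictAntiOn (fun t : ℝ => xstarVal n t) (Set.Ioo 0 1) := by
  obtain ⟨hD, hfix, hpos, hlt, hθx⟩ := key n hn θ hθ0 hθ1
  have hN : (2:ℝ) ≤ (n:ℝ) := by exact_mod_cast hn
  have hN0 : (0:ℝ) < n := by linarith
  refine ⟨hD, hfix, ?_, hpos, hlt, ?_⟩
  · intro y hy0 hy1 hy
    set x := xstarVal n θ with hxdef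
    clear_value x
    have hfac : (y - x) * (1 - θ*(y+x)) = 0 := by
      linear_combination hy - hfix
    rcases mul_eq_zero.mp hfac with h | h
    · linarith [sub_eq_zero.mp h]
    · exfalso
      have hθy : θ * y < θ * 1 := by
        exact mul_lt_mul_of_pos_left hy1 hθ0
      nlinarith [h, hθx, hθy]
  · intro t1 ht1 t2 ht2 h12
    simp only
    obtain ⟨_, ea, ha0, ha1, _⟩ := key n hn t1 ht1.1 ht1.2
    obtain ⟨_, eb, hb0, hb1, _⟩ := key n hn t2 ht2.1 ht2.2
    set a := xstarVal n t1 with hadef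
    set b := xstarVal n t2 with hbdef
    clear_value a b
    have na : (n:ℝ)*a = (1-t1) + n*t1*a^2 := by
      have h := ea; field_simp at h; linear_combination h
    have nb : (n:ℝ)*b = (1-t2) + n*t2*b^2 := by
      have h := eb; field_simp at h; linear_combination h
    have hna : a * (n:ℝ) < 1 := (lt_div_iff₀ hN0).mp ha1
    have hnb : b * (n:ℝ) < 1 := (lt_div_iff₀ hN0).mp hb1
    have hb2 : (n:ℝ)*b^2 < 1 := by nlinarith [hnb, hb0]
    by_contra hc
    push_neg at hc
    have key2 : (n:ℝ)*(a-b)*(1 - t1*(a+b)) = (t2-t1)*(1-(n:ℝ)*b^2) := by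
      linear_combination na - nb
    have h5 : 0 < 1 - t1*(a+b) := by nlinarith [hna, hnb, ha0, hb0, ht1.1, ht1.2]
    have h6 : 0 < (n:ℝ)*(a-b)*(1 - t1*(a+b)) := by
      rw [key2]
      exact mul_pos (by linarith) (by linarith)
    have h7 : 0 ≤ (b-a) * ((n:ℝ)*(1 - t1*(a+b))) :=
      mul_nonneg (by linarith) (mul_pos hN0 h5).le
    have h8 : (n:ℝ)*(a-b)*(1 - t1*(a+b)) = -((b-a)*((n:ℝ)*(1 - t1*(a+b)))) := by ring
    linarith [h8 ▸ h6]
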